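/- arXiv:1608.06793 — 2 statements merged into one kernel-verified Lean document; each statement's English description precedes it below -/
import Mathlib

section
/- Let L be a finite-dimensional solvable Lie algebra over a field of characteristic p > 2 such that the Frattini subalgebra φ(L) is invariant under all derivations of L. Then the nilradical N(L) is invariant under all derivations of L. -/
/-- The canonical quotient map `L → L ⧸ I` as a morphism of Lie algebras. -/
def lieQuotMk {F L : Type*} [Field F] [LieRing L] [LieAlgebra F L] (I : LieIdeal F L) :
    L →ₗ⁅F⁆ L ⧸ I where
  toLinearMap := (LieSubmodule.Quotient.mk' I).toLinearMap
  map_lie' := rfl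

variable (F : Type*) [Field F]

/-- The nilradical: the largest nilpotent ideal of a (finite-dimensional) Lie algebra. -/
noncomputable def nilrad (L : Type*) [LieRing L] [LieAlgebra F L] : LieIdeal F L :=
  sSup {I : LieIdeal F L | LieRing.IsNilpotent I}

/-- The upper nilpotent series: `N 0 = 0`, `N (i+1) / N i = nilradical of L ⧸ N i`. -/
noncomputable def upperNil (L : Type*) [LieRing L] [LieAlgebra F L] : ℕ → LieIdeal F L
  | 0 => ⊥
  | n + 1 => LieIdeal.comap (lieQuotMk (upperNil L n)) (nilrad F (L ⧸ upperNil L n))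

/-- The nilpotent length: the least `n` with `N n = L`. -/
noncomputable def nilLen (L : Type*) [LieRing L] [LieAlgebra F L] : ℕ :=
  sInf {n : ℕ | upperNil F L n = ⊤}

/-- The nilpotent residual `γ∞(L)`: the smallest ideal with nilpotent quotient. -/
noncomputable def nilResidual (L : Type*) [LieRing L] [LieAlgebra F L] : LieIdeal F L :=
  sInf {I : LieIdeal F L | LieRing.IsNilpotent (L ⧸ I)}

/-- The lower nilpotent series: `Γ 0 = L`, `Γ (i+1) = γ∞(Γ i)`, viewed as subalgebras of `L`. -/
noncomputable def lowerNil (L : Type*) [LieRing L] [LieAlgebra F L] : ℕ → LieSubalgebra F L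
  | 0 => ⊤
  | n + 1 =>
      LieSubalgebra.map (lowerNil L n).incl
        (nilResidual F (lowerNil L n)).toLieSubalgebra

/-- `M` is a maximal (proper) subalgebra of `L`. -/
def IsMaxSub {L : Type*} [LieRing L] [LieAlgebra F L] (M : LieSubalgebra F L) : Prop :=
  M ≠ ⊤ ∧ ∀ K : LieSubalgebra F L, M < K → K = ⊤

/-- The Frattini subalgebra: the intersection of all maximal subalgebras. -/
noncomputable def lieFrattini (L : Type*) [LieRing L] [LieAlgebra F L] : LieSubalgebra F L :=
  sInf {M : LieSubalgebra F L | IsMaxSub F M}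

/-- The core of a subalgebra `U`: the largest ideal of `L` contained in `U`. -/
noncomputable def lieCore {L : Type*} [LieRing L] [LieAlgebra F L] (U : LieSubalgebra F L) :
    LieIdeal F L :=
  sSup {I : LieIdeal F L | (I : Set L) ⊆ (U : Set L)}

/-- `A` is a minimal ideal of `L`. -/
def IsMinIdeal {L : Type*} [LieRing L] [LieAlgebra F L] (A : LieIdeal F L) : Prop :=
  A ≠ ⊥ ∧ ∀ B : LieIdeal F L, B < A → B = ⊥

/-- The Frattini series: `φ i (L) / N (i-1) (L) = φ(L ⧸ N (i-1) (L))` for `i ≥ 1`. -/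
noncomputable def fratSeries (L : Type*) [LieRing L] [LieAlgebra F L] (i : ℕ) :
    LieSubalgebra F L :=
  LieSubalgebra.comap (lieQuotMk (upperNil F L (i - 1)))
    (lieFrattini F (L ⧸ upperNil F L (i - 1)))

/-- `L` is extreme: `N i (L) / φ i (L)` is a chief factor of `L` for each `1 ≤ i ≤ n(L)`. -/
def IsExtremeLie (L : Type*) [LieRing L] [LieAlgebra F L] : Prop :=
  ∀ i, 1 ≤ i → i ≤ nilLen F L →
    (fratSeries F L i : Set L) ⊆ (upperNil F L i : Set L) ∧
    (fratSeries F L i : Set L) ≠ (upperNil F L i : Set L) ∧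
    ∀ C : LieIdeal F L, (fratSeries F L i : Set L) ⊆ (C : Set L) → C ≤ upperNil F L i →
      (C : Set L) = (fratSeries F L i : Set L) ∨ C = upperNil F L i

/-- `L` is supersolvable: it has a chain of ideals with one-dimensional quotients. -/
def IsSupersolvable (L : Type*) [LieRing L] [LieAlgebra F L] : Prop :=
  ∃ (n : ℕ) (C : ℕ → LieIdeal F L), C 0 = ⊥ ∧ C n = ⊤ ∧
    ∀ i < n, C i ≤ C (i + 1) ∧
      Module.finrank F (C (i + 1)) = Module.finrank F (C i) + 1

/-- A minimal ideal `A` is complemented if some maximal subalgebra `M` satisfies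
`L = A + M` and `A ∩ M = 0`. -/
def IsComplementedIdeal {L : Type*} [LieRing L] [LieAlgebra F L] (A : LieIdeal F L) : Prop :=
  ∃ M : LieSubalgebra F L, IsMaxSub F M ∧
    A.toSubmodule ⊔ M.toSubmodule = ⊤ ∧ A.toSubmodule ⊓ M.toSubmodule = ⊥
namespace Stmt9Aux

variable {F : Type*} {L : Type*} [Field F] [LieRing L] [LieAlgebra F L]



/-- Every proper subalgebra is contained in a maximal one (finite dimension). -/
theorem exists_maxSub [FiniteDimensional F L] :
    ∀ (n : ℕ) (U : LieSubalgebra F L),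
      Module.finrank F L - Module.finrank F U.toSubmodule ≤ n → U ≠ ⊤ →
      ∃ M : LieSubalgebra F L, IsMaxSub F M ∧ U ≤ M := by
  intro n
  induction n with
  | zero =>
    intro U hle hU
    by_cases hmax : ∀ K : LieSubalgebra F L, U < K → K = ⊤
    · exact ⟨U, ⟨hU, hmax⟩, le_rfl⟩
    · push_neg at hmax
      obtain ⟨K, hUK, hKtop⟩ := hmax
      have h1 : Module.finrank F U.toSubmodule < Module.finrank F K.toSubmodule :=
        Submodule.finrank_lt_finrank_of_lt (by exact_mod_cast hUK)
      have h2 : Module.finrank F K.toSubmodule ≤ Module.finrank F L :=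
        Submodule.finrank_le _
      omega
  | succ n ih =>
    intro U hle hU
    by_cases hmax : ∀ K : LieSubalgebra F L, U < K → K = ⊤
    · exact ⟨U, ⟨hU, hmax⟩, le_rfl⟩
    · push_neg at hmax
      obtain ⟨K, hUK, hKtop⟩ := hmax
      have h1 : Module.finrank F U.toSubmodule < Module.finrank F K.toSubmodule :=
        Submodule.finrank_lt_finrank_of_lt (by exact_mod_cast hUK)
      have h2 : Module.finrank F K.toSubmodule ≤ Module.finrank F L :=
        Submodule.finrank_le _
      obtain ⟨M, hM, hKM⟩ := ih K (by omega) hKtop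
      exact ⟨M, hM, le_of_lt (lt_of_lt_of_le hUK hKM)⟩

theorem exists_maxSub' [FiniteDimensional F L] (U : LieSubalgebra F L) (hU : U ≠ ⊤) :
    ∃ M : LieSubalgebra F L, IsMaxSub F M ∧ U ≤ M :=
  exists_maxSub _ U le_rfl hU

theorem frattini_le_max {M : LieSubalgebra F L} (hM : IsMaxSub F M) :
    lieFrattini F L ≤ M := sInf_le hM

theorem mem_frattini_iff {x : L} :
    x ∈ lieFrattini F L ↔ ∀ M : LieSubalgebra F L, IsMaxSub F M → x ∈ M := by
  constructor
  · intro hx M hM; exact frattini_le_max hM hx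
  · intro h
    have : x ∈ (↑(sInf {M : LieSubalgebra F L | IsMaxSub F M}) : Set L) := by
      rw [LieSubalgebra.coe_sInf]
      simp only [Set.mem_iInter]
      intro M hM; exact h M hM
    exact this




/-- Iterated bracket series `g 0 = I`, `g (n+1) = ⁅I, g n⁆`. -/
def gSer (I : LieIdeal F L) : ℕ → LieIdeal F L
  | 0 => I
  | n + 1 => ⁅I, gSer I n⁆

theorem gSer_le (I : LieIdeal F L) : ∀ n, gSer I n ≤ I
  | 0 => le_rfl
  | n + 1 => LieSubmodule.lie_le_left I (gSer I n)

theorem gSer_le_map (I : LieIdeal F L) :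
    ∀ n, ∀ x ∈ gSer I n, ∃ y : I, y ∈ LieModule.lowerCentralSeries F (↥I) (↥I) n ∧ (y : L) = x := by
  intro n
  induction n with
  | zero => intro x hx; exact ⟨⟨x, hx⟩, LieSubmodule.mem_top _, rfl⟩
  | succ n ih =>
    intro x hx
    have hx' : x ∈ (⁅I, gSer I n⁆ : LieIdeal F L).toSubmodule :=
      (LieSubmodule.mem_toSubmodule _).mpr hx
    rw [LieSubmodule.lieIdeal_oper_eq_linear_span] at hx'
    have hmap : Submodule.span F {m | ∃ (a : I) (b : gSer I n), ⁅(a : L), (b : L)⁆ = m} ≤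
        Submodule.map (I.incl : I →ₗ⁅F⁆ L).toLinearMap
          (LieModule.lowerCentralSeries F (↥I) (↥I) (n + 1)).toSubmodule := by
      rw [Submodule.span_le]
      rintro z ⟨a, b, rfl⟩
      obtain ⟨y, hy, hyb⟩ := ih (b : L) b.2
      refine ⟨⁅a, y⁆, ?_, by
        show (⁅a, y⁆ : L) = ⁅(a : L), (b : L)⁆
        rw [← hyb]; rfl⟩
      have hmem : ⁅a, y⁆ ∈
          (⁅(⊤ : LieIdeal F I), LieModule.lowerCentralSeries F (↥I) (↥I) n⁆ : LieSubmodule F (↥I) (↥I)) :=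
        LieSubmodule.lie_mem_lie (LieSubmodule.mem_top a) hy
      rwa [← LieModule.lowerCentralSeries_succ] at hmem
    obtain ⟨y, hy, hyx⟩ := hmap hx'
    exact ⟨y, hy, hyx⟩

theorem gSer_eq_bot (I : LieIdeal F L) (hI : LieRing.IsNilpotent I) :
    ∃ n, gSer I n = ⊥ := by
  obtain ⟨k, hk⟩ := (LieModule.isNilpotent_iff F I I).mp hI
  refine ⟨k, ?_⟩
  rw [eq_bot_iff]
  intro x hx
  obtain ⟨y, hy, hyx⟩ := gSer_le_map I k x hx
  rw [hk] at hy
  have : y = 0 := by simpa using hy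
  rw [← hyx, this]
  simp

/-- Key fact: for a nilpotent ideal `I`, `⁅I, I⁆` is contained in every maximal subalgebra. -/
theorem lie_mem_max (I : LieIdeal F L) (hI : LieRing.IsNilpotent I)
    (M : LieSubalgebra F L) (hM : IsMaxSub F M) {a b : L} (ha : a ∈ I) (hb : b ∈ I) :
    ⁅a, b⁆ ∈ M := by
  by_cases hWM : ∀ y ∈ (⁅I, I⁆ : LieIdeal F L), y ∈ M
  · exact hWM _ (LieSubmodule.lie_mem_lie ha hb)
  · -- M + ⁅I,I⁆ is a subalgebra strictly containing M, hence ⊤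
    push_neg at hWM
    obtain ⟨w₀, hw₀, hw₀M⟩ := hWM
    set W : LieIdeal F L := ⁅I, I⁆ with hW
    set Msub : Submodule F L := M.toSubmodule ⊔ W.toSubmodule with hMsub
    have hlie : ∀ x ∈ Msub, ∀ y ∈ Msub, ⁅x, y⁆ ∈ Msub := by
      intro x hx y hy
      rw [hMsub, Submodule.mem_sup] at hx hy
      obtain ⟨m, hm, w, hw, rfl⟩ := hx
      obtain ⟨m', hm', w', hw', rfl⟩ := hy
      have h1 : ⁅m, m'⁆ ∈ M.toSubmodule := M.lie_mem hm hm'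
      have h2 : ⁅m, w'⁆ ∈ W.toSubmodule := W.lie_mem hw'
      have h3 : ⁅w, m' + w'⁆ ∈ W.toSubmodule := by
        rw [← lie_skew]
        exact neg_mem (W.lie_mem hw)
      have : ⁅m + w, m' + w'⁆ = ⁅m, m'⁆ + ⁅m, w'⁆ + ⁅w, m' + w'⁆ := by
        simp [lie_add, add_lie]; abel
      rw [this]
      exact add_mem (add_mem (Submodule.mem_sup_left h1) (Submodule.mem_sup_right h2))
        (Submodule.mem_sup_right h3)
    set M' : LieSubalgebra F L := { Msub with lie_mem' := fun {x y} hx hy => hlie x hx y hy }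
    have hMM' : M < M' := by
      constructor
      · intro x hx; exact Submodule.mem_sup_left hx
      · intro hle
        exact hw₀M (hle (Submodule.mem_sup_right (by exact hw₀)))
    have hM'top : M' = ⊤ := hM.2 M' hMM'
    have htop : ∀ x : L, x ∈ Msub := by
      intro x
      have : x ∈ M' := hM'top ▸ trivial
      exact this
    -- K = M ∩ I
    set K : Submodule F L := M.toSubmodule ⊓ I.toSubmodule with hK
    have hbase : (I.toSubmodule : Submodule F L) ≤ K ⊔ (gSer I 1).toSubmodule := by
      intro i hi
      obtain ⟨m, hm, w, hw, hmw⟩ := Submodule.mem_sup.mp (htop i)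
      have hwI : w ∈ I := LieSubmodule.lie_le_left I I ((LieSubmodule.mem_toSubmodule _).mp hw)
      have hmI : m ∈ I := by
        have : m = i - w := by rw [← hmw]; abel
        rw [this]; exact sub_mem hi hwI
      refine Submodule.mem_sup.mpr ⟨m, ⟨hm, hmI⟩, w, ?_, hmw⟩
      simpa [gSer] using hw
    have hdec : ∀ n, (I.toSubmodule : Submodule F L) ≤ K ⊔ (gSer I (n + 1)).toSubmodule := by
      intro n
      induction n with
      | zero => exact hbase
      | succ n ih =>
        have hg1 : (gSer I 1).toSubmodule ≤ K ⊔ (gSer I (n + 2)).toSubmodule := by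
          have hspan : (gSer I 1).toSubmodule =
              Submodule.span F {m | ∃ (a : I) (b : I), ⁅(a : L), (b : L)⁆ = m} := by
            show (⁅I, I⁆ : LieIdeal F L).toSubmodule = _
            rw [LieSubmodule.lieIdeal_oper_eq_linear_span]
          rw [hspan, Submodule.span_le]
          rintro z ⟨a, b, rfl⟩
          rw [SetLike.mem_coe]
          obtain ⟨k₁, hk₁, w₁, hw₁, hd₁⟩ := Submodule.mem_sup.mp (ih a.2)
          obtain ⟨k₂, hk₂, w₂, hw₂, hd₂⟩ := Submodule.mem_sup.mp (ih b.2)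
          have hk₁M : k₁ ∈ M.toSubmodule := hk₁.1
          have hk₁I : k₁ ∈ I := hk₁.2
          have hk₂M : k₂ ∈ M.toSubmodule := hk₂.1
          have hk₂I : k₂ ∈ I := hk₂.2
          have hw₁I : w₁ ∈ I := gSer_le I (n + 1) ((LieSubmodule.mem_toSubmodule _).mp hw₁)
          have expand : ⁅(a : L), (b : L)⁆ =
              ⁅k₁, k₂⁆ + ⁅k₁, w₂⁆ + ⁅w₁, k₂⁆ + ⁅w₁, w₂⁆ := by
            rw [← hd₁, ← hd₂]; simp only [lie_add, add_lie]; abel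
          rw [expand]
          have e1 : ⁅k₁, k₂⁆ ∈ K := ⟨M.lie_mem hk₁M hk₂M, I.lie_mem hk₂I⟩
          have e2 : ⁅k₁, w₂⁆ ∈ gSer I (n + 2) := LieSubmodule.lie_mem_lie hk₁I ((LieSubmodule.mem_toSubmodule _).mp hw₂)
          have e3 : ⁅w₁, k₂⁆ ∈ gSer I (n + 2) := by
            rw [← lie_skew]
            exact neg_mem (LieSubmodule.lie_mem_lie hk₂I ((LieSubmodule.mem_toSubmodule _).mp hw₁))
          have e4 : ⁅w₁, w₂⁆ ∈ gSer I (n + 2) := LieSubmodule.lie_mem_lie hw₁I ((LieSubmodule.mem_toSubmodule _).mp hw₂)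
          exact add_mem (add_mem (add_mem (Submodule.mem_sup_left e1)
            (Submodule.mem_sup_right ((LieSubmodule.mem_toSubmodule _).mpr e2)))
            (Submodule.mem_sup_right ((LieSubmodule.mem_toSubmodule _).mpr e3)))
            (Submodule.mem_sup_right ((LieSubmodule.mem_toSubmodule _).mpr e4))
        refine le_trans hbase (le_trans (sup_le_sup_left hg1 _) (le_of_eq ?_))
        rw [← sup_assoc, sup_idem]
    obtain ⟨k, hk⟩ := gSer_eq_bot I hI
    have hgk1 : gSer I (k + 1) = ⊥ := by
      show ⁅I, gSer I k⁆ = ⊥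
      rw [hk]
      exact LieSubmodule.lie_bot I
    have hIK : (I.toSubmodule : Submodule F L) ≤ K := by
      have h := hdec k
      rw [hgk1] at h
      simpa using h
    have haM : a ∈ M := (hIK ha).1
    have hbM : b ∈ M := (hIK hb).1
    exact M.lie_mem haM hbM







open Filter in
/-- Marshall's trick: if all high powers of `ad x` land in the Frattini subalgebra,
then `ad x` is nilpotent. -/
theorem isNilpotent_ad_of_pow_le_frattini [FiniteDimensional F L] (x : L)
    (h5 : ∀ y : L, ((LieAlgebra.ad F L x) ^ 5) y ∈ lieFrattini F L) :
    IsNilpotent (LieAlgebra.ad F L x) := by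
  by_contra hnil
  set f := LieAlgebra.ad F L x with hf
  obtain ⟨n₀, hn₀⟩ := eventually_atTop.mp
    (f.eventually_isCompl_ker_pow_range_pow.and f.eventually_iSup_ker_pow_eq)
  set m := max n₀ 5 with hm
  obtain ⟨hcompl, hsup⟩ := hn₀ m (le_max_left _ _)
  -- the kernel is a Lie subalgebra
  have hker_lie : ∀ a ∈ LinearMap.ker (f ^ m), ∀ b ∈ LinearMap.ker (f ^ m),
      ⁅a, b⁆ ∈ LinearMap.ker (f ^ m) := by
    intro a ha b hb
    have h2m : ⁅a, b⁆ ∈ LinearMap.ker (f ^ (2 * m)) := by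
      rw [LinearMap.mem_ker]
      have hD : ∀ (k : ℕ) (z : L), (⇑(LieDerivation.ad F L x))^[k] z = (f ^ k) z := by
        intro k z
        rw [Module.End.pow_apply]
        congr 1
        ext w
        simp [hf]
      have := LieDerivation.iterate_apply_lie' (LieDerivation.ad F L x) (2 * m) a b
      rw [← hD]
      rw [this]
      apply Finset.sum_eq_zero
      intro i hi
      rw [Finset.mem_range] at hi
      rcases le_or_gt m i with hcase | hcase
      · have : (⇑(LieDerivation.ad F L x))^[i] a = 0 := by
          rw [hD]
          have : f ^ i = f ^ (i - m) * f ^ m := by rw [← pow_add]; congr 1; omega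
          rw [this, Module.End.mul_apply, LinearMap.mem_ker.mp ha, map_zero]
        simp [this]
      · have : (⇑(LieDerivation.ad F L x))^[2 * m - i] b = 0 := by
          rw [hD]
          have : f ^ (2 * m - i) = f ^ (2 * m - i - m) * f ^ m := by
            rw [← pow_add]; congr 1; omega
          rw [this, Module.End.mul_apply, LinearMap.mem_ker.mp hb, map_zero]
        simp [this]
    -- ker (f ^ (2m)) ≤ ⨆ ker pows = ker (f ^ m)
    have : LinearMap.ker (f ^ (2 * m)) ≤ ⨆ n, LinearMap.ker (f ^ n) :=
      le_iSup (fun n => LinearMap.ker (f ^ n)) (2 * m)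
    rw [hsup] at this
    exact this h2m
  set K₀ : LieSubalgebra F L :=
    { LinearMap.ker (f ^ m) with
      lie_mem' := fun {a b} ha hb => hker_lie a ha b hb } with hK₀
  have hK₀ne : K₀ ≠ ⊤ := by
    intro htop
    apply hnil
    refine ⟨m, ?_⟩
    ext z
    have : z ∈ K₀ := htop ▸ trivial
    simpa using (LinearMap.mem_ker (f := f ^ m)).mp this
  obtain ⟨M, hM, hKM⟩ := exists_maxSub' K₀ hK₀ne
  apply hM.1
  have hrange : LinearMap.range (f ^ m) ≤ (lieFrattini F L).toSubmodule := by
    rintro _ ⟨y, rfl⟩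
    have : f ^ m = f ^ 5 * f ^ (m - 5) := by rw [← pow_add]; congr 1; omega
    rw [this, Module.End.mul_apply]
    exact h5 _
  have : ∀ z : L, z ∈ M := by
    intro z
    have hz : z ∈ LinearMap.ker (f ^ m) ⊔ LinearMap.range (f ^ m) := by
      rw [hcompl.sup_eq_top]; trivial
    obtain ⟨a, ha, b, hb, rfl⟩ := Submodule.mem_sup.mp hz
    exact M.add_mem (hKM ha) (frattini_le_max hM (hrange hb))
  ext z
  simp only [LieSubalgebra.mem_top, iff_true]
  exact this z

/-- If `(ad x)^5 L ⊆ φ(L)` for every `x ∈ J`, the ideal `J` is nilpotent. -/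
theorem isNilpotent_of_ad_pow_le_frattini [FiniteDimensional F L] (J : LieIdeal F L)
    (h5 : ∀ x ∈ J, ∀ y : L, ((LieAlgebra.ad F L x) ^ 5) y ∈ lieFrattini F L) :
    LieRing.IsNilpotent J := by
  have : IsNoetherian F J := by infer_instance
  rw [LieAlgebra.isNilpotent_iff_forall (R := F)]
  intro y
  obtain ⟨n, hn⟩ := isNilpotent_ad_of_pow_le_frattini (y : L) (h5 _ y.2)
  refine ⟨n, ?_⟩
  ext z
  have key : ∀ (k : ℕ) (z : J), (((LieAlgebra.ad F J y) ^ k) z : L) =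
      ((LieAlgebra.ad F L (y : L)) ^ k) (z : L) := by
    intro k
    induction k with
    | zero => intro z; rfl
    | succ k ih =>
      intro z
      rw [pow_succ', pow_succ', Module.End.mul_apply, Module.End.mul_apply, ← ih]
      rfl
  have : (((LieAlgebra.ad F J y) ^ n) z : L) = 0 := by
    rw [key, hn]
    rfl
  simpa using this







/-- The main computation: for a nilpotent ideal `I` and a derivation `D` preserving the
Frattini subalgebra (which is itself preserved by all inner derivations), `D I ⊆ N(L)`. -/
theorem deriv_nilpotent_ideal_mem_nilrad [FiniteDimensional F L]
    (p : ℕ) [CharP F p] (hp : 2 < p)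
    (hphi : ∀ (E : LieDerivation F L L), ∀ x ∈ lieFrattini F L, E x ∈ lieFrattini F L)
    (D : LieDerivation F L L) (I : LieIdeal F L) (hI : LieRing.IsNilpotent I) :
    ∀ x ∈ I, D x ∈ nilrad F L := by
  classical
  set φS : Submodule F L := (lieFrattini F L).toSubmodule with hφS
  have hmemφ : ∀ z : L, z ∈ φS ↔ z ∈ lieFrattini F L := fun z => Iff.rfl
  -- φ is invariant under inner derivations, i.e. an ideal
  have hφi : ∀ z u : L, u ∈ φS → ⁅z, u⁆ ∈ φS := by
    intro z u hu
    have h1 := hphi (LieDerivation.ad F L z) u hu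
    have e : ((LieDerivation.ad F L) z) u = ⁅z, u⁆ := by simp
    rwa [e] at h1
  have hφi' : ∀ z u : L, u ∈ φS → ⁅u, z⁆ ∈ φS := by
    intro z u hu
    rw [← lie_skew]
    exact neg_mem (hφi z u hu)
  have hφd : ∀ u ∈ φS, D u ∈ φS := fun u hu => hphi D u hu
  -- brackets of elements of I lie in φ
  have hC : ∀ a ∈ I, ∀ b ∈ I, ⁅a, b⁆ ∈ φS := by
    intro a ha b hb
    exact mem_frattini_iff.mpr fun M hM => lie_mem_max I hI M hM ha hb
  have htwo : (2 : F) ≠ 0 := by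
    have h2 : ((2 : ℕ) : F) = 0 ↔ p ∣ 2 := CharP.cast_eq_zero_iff F p 2
    intro hcon
    have : p ∣ 2 := h2.mp (by exact_mod_cast hcon)
    have := Nat.le_of_dvd (by norm_num) this
    omega
  -- symmetry mod φ
  have sym : ∀ a ∈ I, ∀ b ∈ I, ⁅D a, b⁆ - ⁅D b, a⁆ ∈ φS := by
    intro a ha b hb
    have e : ⁅D a, b⁆ - ⁅D b, a⁆ = D ⁅a, b⁆ := by
      rw [LieDerivation.apply_lie_eq_sub, ← lie_skew a (D b), ← lie_skew b (D a)]
      abel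
    rw [e]
    exact hφd _ (hC a ha b hb)
  -- the (*) identity mod φ
  have star : ∀ m ∈ I, ∀ k ∈ I, ∀ n ∈ I,
      ⁅D ⁅D m, k⁆, n⁆ - (⁅D m, ⁅D k, n⁆⁆ - ⁅D k, ⁅D m, n⁆⁆) ∈ φS := by
    intro m hm k hk n hn
    have e : ⁅D ⁅D m, k⁆, n⁆ - (⁅D m, ⁅D k, n⁆⁆ - ⁅D k, ⁅D m, n⁆⁆) = ⁅⁅D (D m), k⁆, n⁆ := by
      rw [LieDerivation.apply_lie_eq_add, add_lie, lie_lie]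
      abel
    rw [e]
    exact hC _ (I.lie_mem hk) n hn
  -- ⁅D k, ⁅D n, n⁆⁆ ∈ φ
  have two_ : ∀ k ∈ I, ∀ n ∈ I, ⁅D k, ⁅D n, n⁆⁆ ∈ φS := by
    intro k hk n hn
    have h1 := star n hn k hk n hn
    have h2 := sym ⁅D n, k⁆ (I.lie_mem hk) n hn
    have h3 := sym k hk n hn
    have h4 : ⁅D n, ⁅D k, n⁆⁆ - ⁅D n, ⁅D n, k⁆⁆ ∈ φS := by
      have := hφi (D n) _ h3
      rwa [lie_sub] at this
    have e : ⁅D k, ⁅D n, n⁆⁆ =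
        (⁅D ⁅D n, k⁆, n⁆ - (⁅D n, ⁅D k, n⁆⁆ - ⁅D k, ⁅D n, n⁆⁆))
        - (⁅D ⁅D n, k⁆, n⁆ - ⁅D n, ⁅D n, k⁆⁆)
        + (⁅D n, ⁅D k, n⁆⁆ - ⁅D n, ⁅D n, k⁆⁆) := by abel
    rw [e]
    exact add_mem (sub_mem h1 h2) h4
  -- polarized: ⁅D k, ⁅D n, m⁆⁆ ∈ φ
  have three : ∀ k ∈ I, ∀ n ∈ I, ∀ m ∈ I, ⁅D k, ⁅D n, m⁆⁆ ∈ φS := by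
    intro k hk n hn m hm
    have t1 := two_ k hk (n + m) (add_mem hn hm)
    have t2 := two_ k hk n hn
    have t3 := two_ k hk m hm
    have hS : ⁅D k, ⁅D n, m⁆⁆ + ⁅D k, ⁅D m, n⁆⁆ ∈ φS := by
      have e : ⁅D k, ⁅D n, m⁆⁆ + ⁅D k, ⁅D m, n⁆⁆ =
          ⁅D k, ⁅D (n + m), n + m⁆⁆ - ⁅D k, ⁅D n, n⁆⁆ - ⁅D k, ⁅D m, m⁆⁆ := by
        simp only [map_add, add_lie, lie_add]
        abel
      rw [e]
      exact sub_mem (sub_mem t1 t2) t3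
    have h4 : ⁅D k, ⁅D m, n⁆⁆ - ⁅D k, ⁅D n, m⁆⁆ ∈ φS := by
      have := hφi (D k) _ (sym m hm n hn)
      rwa [lie_sub] at this
    have h2a : (2 : F) • ⁅D k, ⁅D n, m⁆⁆ ∈ φS := by
      have e : (2 : F) • ⁅D k, ⁅D n, m⁆⁆ =
          (⁅D k, ⁅D n, m⁆⁆ + ⁅D k, ⁅D m, n⁆⁆) - (⁅D k, ⁅D m, n⁆⁆ - ⁅D k, ⁅D n, m⁆⁆) := by
        rw [two_smul]; abel
      rw [e]
      exact sub_mem hS h4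
    have := φS.smul_mem ((2 : F)⁻¹) h2a
    rwa [smul_smul, inv_mul_cancel₀ htwo, one_smul] at this
  -- the span P of brackets ⁅D a, b⁆
  set Dl : L →ₗ[F] L := D.toLinearMap with hDl
  have hDlD : ∀ z : L, Dl z = D z := fun _ => rfl
  set P : Submodule F L := Submodule.span F {z | ∃ a ∈ I, ∃ b ∈ I, ⁅D a, b⁆ = z} with hP
  have hPI : P ≤ I.toSubmodule := by
    rw [hP, Submodule.span_le]
    rintro z ⟨a, ha, b, hb, rfl⟩
    exact I.lie_mem hb
  have hDkP : ∀ k ∈ I, ∀ q ∈ P, ⁅D k, q⁆ ∈ φS := by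
    intro k hk
    have : P ≤ Submodule.comap (LieAlgebra.ad F L (D k)) φS := by
      rw [hP, Submodule.span_le]
      rintro z ⟨a, ha, b, hb, rfl⟩
      simpa using three k hk a ha b hb
    intro q hq
    exact this hq
  have hPDφ : ∀ n ∈ I, ∀ q ∈ P, ⁅n, Dl q⁆ ∈ φS := by
    intro n hn
    have : P ≤ Submodule.comap ((LieAlgebra.ad F L n) ∘ₗ Dl) φS := by
      rw [hP, Submodule.span_le]
      rintro z ⟨a, ha, b, hb, rfl⟩
      rw [SetLike.mem_coe]
      simp only [Submodule.mem_comap, LinearMap.comp_apply, LieAlgebra.ad_apply]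
      rw [hDlD]
      have hstar := star a ha b hb n hn
      have ht1 := three a ha b hb n hn
      have ht2 := three b hb a ha n hn
      have hDD : ⁅D ⁅D a, b⁆, n⁆ ∈ φS := by
        have e : ⁅D ⁅D a, b⁆, n⁆ =
            (⁅D ⁅D a, b⁆, n⁆ - (⁅D a, ⁅D b, n⁆⁆ - ⁅D b, ⁅D a, n⁆⁆))
            + ⁅D a, ⁅D b, n⁆⁆ - ⁅D b, ⁅D a, n⁆⁆ := by abel
        rw [e]
        exact sub_mem (add_mem hstar ht1) ht2
      rw [← lie_skew]
      exact neg_mem hDD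
    intro q hq
    exact this hq
  -- the ideal J = I + D(I) + φ
  set DIs : Submodule F L := I.toSubmodule.map Dl with hDIs
  set Q : Submodule F L := P.map Dl with hQ
  set Jsub : Submodule F L := I.toSubmodule ⊔ DIs ⊔ φS with hJsub
  have decompJ : ∀ w ∈ Jsub, ∃ i ∈ I, ∃ a ∈ I, ∃ u ∈ φS, w = i + D a + u := by
    intro w hw
    obtain ⟨v, hv, u, hu, rfl⟩ := Submodule.mem_sup.mp hw
    obtain ⟨i, hi, d, hd, rfl⟩ := Submodule.mem_sup.mp hv
    obtain ⟨a, ha, rfl⟩ := Submodule.mem_map.mp hd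
    exact ⟨i, hi, a, ha, u, hu, by rw [hDlD]⟩
  have hJideal : ∀ z : L, ∀ w ∈ Jsub, ⁅z, w⁆ ∈ Jsub := by
    intro z w hw
    obtain ⟨i, hi, a, ha, u, hu, rfl⟩ := decompJ w hw
    have e1 : ⁅z, i⁆ ∈ Jsub :=
      Submodule.mem_sup_left (Submodule.mem_sup_left (I.lie_mem hi))
    have e2 : ⁅z, D a⁆ ∈ Jsub := by
      have e : ⁅z, D a⁆ = D ⁅z, a⁆ - ⁅D z, a⁆ := by
        rw [LieDerivation.apply_lie_eq_add]; abel
      rw [e]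
      have hDza : Dl ⁅z, a⁆ ∈ DIs :=
        Submodule.mem_map_of_mem ((LieSubmodule.mem_toSubmodule _).mpr (I.lie_mem ha))
      rw [hDlD] at hDza
      exact sub_mem (Submodule.mem_sup_left (Submodule.mem_sup_right hDza))
        (Submodule.mem_sup_left (Submodule.mem_sup_left
          ((LieSubmodule.mem_toSubmodule _).mpr (I.lie_mem ha))))
    have e3 : ⁅z, u⁆ ∈ Jsub := Submodule.mem_sup_right (hφi z u hu)
    simp only [lie_add]
    exact add_mem (add_mem e1 e2) e3
  -- helper membership facts
  have hIr : ∀ z w : L, w ∈ I → ⁅z, w⁆ ∈ I.toSubmodule :=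
    fun z w hw => (LieSubmodule.mem_toSubmodule _).mpr (I.lie_mem hw)
  have hIl : ∀ z w : L, w ∈ I → ⁅w, z⁆ ∈ I.toSubmodule := by
    intro z w hw
    rw [← lie_skew]
    exact neg_mem (hIr z w hw)
  set c1 : Submodule F L := I.toSubmodule ⊔ Q ⊔ φS with hc1
  set c2 : Submodule F L := I.toSubmodule ⊔ φS with hc2
  set c3 : Submodule F L := P ⊔ φS with hc3
  have hgenP : ∀ a ∈ I, ∀ b ∈ I, ⁅D a, b⁆ ∈ P := by
    intro a ha b hb
    exact Submodule.subset_span ⟨a, ha, b, hb, rfl⟩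
  have B1 : ∀ a ∈ Jsub, ∀ b ∈ Jsub, ⁅a, b⁆ ∈ c1 := by
    intro a ha b hb
    obtain ⟨i, hi, a', ha', u, hu, rfl⟩ := decompJ a ha
    obtain ⟨i', hi', b', hb', u', hu', rfl⟩ := decompJ b hb
    have expand : ⁅i + D a' + u, i' + D b' + u'⁆ =
        ⁅i, i'⁆ + ⁅i, D b'⁆ + ⁅i, u'⁆ + ⁅D a', i'⁆ + ⁅D a', D b'⁆ + ⁅D a', u'⁆
        + ⁅u, i' + D b' + u'⁆ := by
      simp only [lie_add, add_lie]; abel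
    rw [expand]
    have m1 : ⁅i, i'⁆ ∈ c1 := Submodule.mem_sup_right (hC i hi i' hi')
    have m2 : ⁅i, D b'⁆ ∈ c1 :=
      Submodule.mem_sup_left (Submodule.mem_sup_left (hIl _ _ hi))
    have m3 : ⁅i, u'⁆ ∈ c1 := Submodule.mem_sup_right (hφi i u' hu')
    have m4 : ⁅D a', i'⁆ ∈ c1 :=
      Submodule.mem_sup_left (Submodule.mem_sup_left (hIr _ _ hi'))
    have m5 : ⁅D a', D b'⁆ ∈ c1 := by
      have e : ⁅D a', D b'⁆ = D ⁅a', D b'⁆ - ⁅a', D (D b')⁆ := by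
        rw [LieDerivation.apply_lie_eq_add]; abel
      rw [e]
      have hmemP : ⁅a', D b'⁆ ∈ P := by
        rw [← lie_skew]
        exact neg_mem (hgenP b' hb' a' ha')
      have hQmem : D ⁅a', D b'⁆ ∈ Q := Submodule.mem_map_of_mem hmemP
      exact sub_mem (Submodule.mem_sup_left (Submodule.mem_sup_right hQmem))
        (Submodule.mem_sup_left (Submodule.mem_sup_left (hIl _ _ ha')))
    have m6 : ⁅D a', u'⁆ ∈ c1 := Submodule.mem_sup_right (hφi _ u' hu')
    have m7 : ⁅u, i' + D b' + u'⁆ ∈ c1 := Submodule.mem_sup_right (hφi' _ u hu)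
    exact add_mem (add_mem (add_mem (add_mem (add_mem (add_mem m1 m2) m3) m4) m5) m6) m7
  have decompC1 : ∀ w ∈ c1, ∃ i ∈ I, ∃ q ∈ P, ∃ u ∈ φS, w = i + Dl q + u := by
    intro w hw
    obtain ⟨v, hv, u, hu, rfl⟩ := Submodule.mem_sup.mp hw
    obtain ⟨i, hi, d, hd, rfl⟩ := Submodule.mem_sup.mp hv
    obtain ⟨q, hq, rfl⟩ := Submodule.mem_map.mp hd
    exact ⟨i, hi, q, hq, u, hu, rfl⟩
  have B2 : ∀ a ∈ Jsub, ∀ b ∈ c1, ⁅a, b⁆ ∈ c2 := by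
    intro a ha b hb
    obtain ⟨i, hi, a', ha', u, hu, rfl⟩ := decompJ a ha
    obtain ⟨i', hi', q, hq, u', hu', rfl⟩ := decompC1 b hb
    have expand : ⁅i + D a' + u, i' + Dl q + u'⁆ =
        ⁅i, i'⁆ + ⁅i, Dl q⁆ + ⁅i, u'⁆ + ⁅D a', i'⁆ + ⁅D a', Dl q⁆ + ⁅D a', u'⁆
        + ⁅u, i' + Dl q + u'⁆ := by
      simp only [lie_add, add_lie]; abel
    rw [expand]
    have m1 : ⁅i, i'⁆ ∈ c2 := Submodule.mem_sup_right (hC i hi i' hi')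
    have m2 : ⁅i, Dl q⁆ ∈ c2 := Submodule.mem_sup_right (hPDφ i hi q hq)
    have m3 : ⁅i, u'⁆ ∈ c2 := Submodule.mem_sup_right (hφi i u' hu')
    have m4 : ⁅D a', i'⁆ ∈ c2 := Submodule.mem_sup_left (hIr _ _ hi')
    have m5 : ⁅D a', Dl q⁆ ∈ c2 := by
      have e : ⁅D a', Dl q⁆ = D ⁅a', Dl q⁆ - ⁅a', D (Dl q)⁆ := by
        rw [LieDerivation.apply_lie_eq_add]; abel
      rw [e]
      exact sub_mem (Submodule.mem_sup_right (hφd _ (hPDφ a' ha' q hq)))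
        (Submodule.mem_sup_left (hIl _ _ ha'))
    have m6 : ⁅D a', u'⁆ ∈ c2 := Submodule.mem_sup_right (hφi _ u' hu')
    have m7 : ⁅u, i' + Dl q + u'⁆ ∈ c2 := Submodule.mem_sup_right (hφi' _ u hu)
    exact add_mem (add_mem (add_mem (add_mem (add_mem (add_mem m1 m2) m3) m4) m5) m6) m7
  have B3 : ∀ a ∈ Jsub, ∀ b ∈ c2, ⁅a, b⁆ ∈ c3 := by
    intro a ha b hb
    obtain ⟨i, hi, a', ha', u, hu, rfl⟩ := decompJ a ha
    obtain ⟨i', hi', u', hu', rfl⟩ := Submodule.mem_sup.mp hb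
    have hi'I : i' ∈ I := (LieSubmodule.mem_toSubmodule _).mp hi'
    have expand : ⁅i + D a' + u, i' + u'⁆ =
        ⁅i, i'⁆ + ⁅i, u'⁆ + ⁅D a', i'⁆ + ⁅D a', u'⁆ + ⁅u, i' + u'⁆ := by
      simp only [lie_add, add_lie]; abel
    rw [expand]
    have m1 : ⁅i, i'⁆ ∈ c3 := Submodule.mem_sup_right (hC i hi i' hi'I)
    have m2 : ⁅i, u'⁆ ∈ c3 := Submodule.mem_sup_right (hφi i u' hu')
    have m3 : ⁅D a', i'⁆ ∈ c3 := Submodule.mem_sup_left (hgenP a' ha' i' hi'I)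
    have m4 : ⁅D a', u'⁆ ∈ c3 := Submodule.mem_sup_right (hφi _ u' hu')
    have m5 : ⁅u, i' + u'⁆ ∈ c3 := Submodule.mem_sup_right (hφi' _ u hu)
    exact add_mem (add_mem (add_mem (add_mem m1 m2) m3) m4) m5
  have B4 : ∀ a ∈ Jsub, ∀ b ∈ c3, ⁅a, b⁆ ∈ φS := by
    intro a ha b hb
    obtain ⟨i, hi, a', ha', u, hu, rfl⟩ := decompJ a ha
    obtain ⟨q, hq, u', hu', rfl⟩ := Submodule.mem_sup.mp hb
    have hqI : q ∈ I := (LieSubmodule.mem_toSubmodule _).mp (hPI hq)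
    have expand : ⁅i + D a' + u, q + u'⁆ =
        ⁅i, q⁆ + ⁅i, u'⁆ + ⁅D a', q⁆ + ⁅D a', u'⁆ + ⁅u, q + u'⁆ := by
      simp only [lie_add, add_lie]; abel
    rw [expand]
    have m1 : ⁅i, q⁆ ∈ φS := hC i hi q hqI
    have m2 : ⁅i, u'⁆ ∈ φS := hφi i u' hu'
    have m3 : ⁅D a', q⁆ ∈ φS := hDkP a' ha' q hq
    have m4 : ⁅D a', u'⁆ ∈ φS := hφi _ u' hu'
    have m5 : ⁅u, q + u'⁆ ∈ φS := hφi' _ u hu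
    exact add_mem (add_mem (add_mem (add_mem m1 m2) m3) m4) m5
  -- powers of ad land in the Frattini subalgebra
  have hpow : ∀ x ∈ Jsub, ∀ y : L, ((LieAlgebra.ad F L x) ^ 5) y ∈ lieFrattini F L := by
    intro x hx y
    have s1 : ⁅x, y⁆ ∈ Jsub := by
      rw [← lie_skew]
      exact neg_mem (hJideal y x hx)
    have s2 := B1 x hx _ s1
    have s3 := B2 x hx _ s2
    have s4 := B3 x hx _ s3
    have s5 := B4 x hx _ s4
    have e : ((LieAlgebra.ad F L x) ^ 5) y = ⁅x, ⁅x, ⁅x, ⁅x, ⁅x, y⁆⁆⁆⁆⁆ := by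
      simp [pow_succ', Module.End.mul_apply]
    rw [e]
    exact (hmemφ _).mp s5
  -- J is a nilpotent ideal
  set J : LieIdeal F L := { toSubmodule := Jsub, lie_mem := fun {x m} hm => hJideal x m hm }
    with hJ
  have hJnil : LieRing.IsNilpotent J :=
    isNilpotent_of_ad_pow_le_frattini J (fun x hx y => hpow x hx y)
  have hJle : J ≤ nilrad F L :=
    le_sSup (show J ∈ {I : LieIdeal F L | LieRing.IsNilpotent I} from hJnil)
  intro x hx
  have hDx : D x ∈ J := by
    show D x ∈ Jsub
    refine Submodule.mem_sup_left (Submodule.mem_sup_right ?_)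
    exact (hDlD x) ▸ Submodule.mem_map_of_mem ((LieSubmodule.mem_toSubmodule _).mpr hx)
  exact hJle hDx


end Stmt9Aux

/-- Char `p > 2`, `L` solvable: if `φ(L)` is invariant under all derivations,
then so is `N(L)`. -/
theorem stmt9 {F L : Type*} [Field F] [LieRing L] [LieAlgebra F L]
    [FiniteDimensional F L] [LieAlgebra.IsSolvable L] (p : ℕ) [CharP F p] (hp : 2 < p)
    (hphi : ∀ (D : LieDerivation F L L), ∀ x ∈ lieFrattini F L, D x ∈ lieFrattini F L) :
    ∀ (D : LieDerivation F L L), ∀ x ∈ nilrad F L, D x ∈ nilrad F L := by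
  intro D x hx
  have key : ∀ I : LieIdeal F L, LieRing.IsNilpotent I → ∀ y ∈ I, D y ∈ nilrad F L :=
    fun I hI => Stmt9Aux.deriv_nilpotent_ideal_mem_nilrad p hp hphi D I hI
  have hle : (nilrad F L).toSubmodule ≤
      Submodule.comap D.toLinearMap (nilrad F L).toSubmodule := by
    conv_lhs => rw [nilrad, LieSubmodule.sSup_toSubmodule]
    apply sSup_le
    rintro pm ⟨I, hI, rfl⟩
    intro y hy
    exact (LieSubmodule.mem_toSubmodule _).mpr
      (key I hI y ((LieSubmodule.mem_toSubmodule _).mp hy))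
  exact (LieSubmodule.mem_toSubmodule _).mp (hle ((LieSubmodule.mem_toSubmodule _).mpr hx))
end

section
/- Let L be a finite-dimensional solvable Lie algebra that is minimal non-N(≤ k−1), i.e., n(L) = k but every proper subalgebra of L has nilpotent length ≤ k−1. Then L² = N_{k-1}(L) and L² has codimension one in L. -/
variable (F : Type*) [Field F]

namespace Stmt17Aux

variable {F L : Type*} [Field F] [LieRing L] [LieAlgebra F L]

/-- The series `I, ⁅I,I⁆, ⁅I,⁅I,I⁆⁆, ...` of an ideal, inside the ambient lattice. -/
def cser (I : LieIdeal F L) : ℕ → LieIdeal F L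
  | 0 => I
  | k + 1 => ⁅I, cser I k⁆

@[simp] theorem cser_zero (I : LieIdeal F L) : cser I 0 = I := rfl

@[simp] theorem cser_succ (I : LieIdeal F L) (k : ℕ) : cser I (k + 1) = ⁅I, cser I k⁆ := rfl

theorem cser_le_self (I : LieIdeal F L) (k : ℕ) : cser I k ≤ I := by
  induction k with
  | zero => exact le_rfl
  | succ k ih => exact (LieSubmodule.lie_le_left _ _)

theorem cser_succ_le (I : LieIdeal F L) (k : ℕ) : cser I (k + 1) ≤ cser I k :=
  LieSubmodule.lie_le_right _ _

theorem cser_antitone (I : LieIdeal F L) {k l : ℕ} (h : k ≤ l) : cser I l ≤ cser I k := by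
  induction l with
  | zero => simp_all
  | succ l ih =>
    rcases Nat.lt_or_ge k (l+1) with h' | h'
    · exact (cser_succ_le I l).trans (ih (by omega))
    · have : k = l + 1 := by omega
      subst this; exact le_rfl

theorem cser_mono {I J : LieIdeal F L} (h : I ≤ J) (k : ℕ) : cser I k ≤ cser J k := by
  induction k with
  | zero => exact h
  | succ k ih => exact LieSubmodule.mono_lie h ih

/-- Bridge, direction A. -/
theorem cser_subset_val_lcs (I : LieIdeal F L) (k : ℕ) :
    (cser I k : Set L) ⊆ Subtype.val '' (LieModule.lowerCentralSeries F I I k : Set I) := by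
  induction k with
  | zero => exact fun x hx => ⟨⟨x, hx⟩, LieSubmodule.mem_top _, rfl⟩
  | succ k ih =>
    intro x hx
    have hle : (cser I (k+1)).toSubmodule ≤
        Submodule.map (I.toSubmodule.subtype)
          (LieModule.lowerCentralSeries F I I (k+1)).toSubmodule := by
      rw [cser_succ, LieSubmodule.lieIdeal_oper_eq_linear_span']
      rw [Submodule.span_le]
      rintro z ⟨y, hy, n, hn, rfl⟩
      obtain ⟨m, hm, hmval⟩ := ih hn
      refine ⟨⁅(⟨y, hy⟩ : I), m⁆, ?_, ?_⟩
      · rw [LieModule.lowerCentralSeries_succ]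
        exact LieSubmodule.lie_mem_lie (LieSubmodule.mem_top _) hm
      · show ((⁅(⟨y, hy⟩ : I), m⁆ : I) : L) = ⁅y, n⁆
        rw [← hmval]; rfl
    obtain ⟨m, hm, hmv⟩ := hle hx
    exact ⟨m, hm, hmv⟩

/-- Bridge, direction B. -/
theorem lcs_val_mem_cser (I : LieIdeal F L) (k : ℕ) :
    ∀ m : I, m ∈ LieModule.lowerCentralSeries F I I k → (m : L) ∈ cser I k := by
  induction k with
  | zero => exact fun m _ => m.2
  | succ k ih =>
    have hle : (LieModule.lowerCentralSeries F I I (k+1)).toSubmodule ≤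
        Submodule.comap (I.toSubmodule.subtype) (cser I (k+1)).toSubmodule := by
      rw [LieModule.lowerCentralSeries_succ, LieSubmodule.lieIdeal_oper_eq_linear_span']
      rw [Submodule.span_le]
      rintro z ⟨y, -, n, hn, rfl⟩
      refine Submodule.mem_comap.mpr ?_
      show ((⁅y, n⁆ : I) : L) ∈ (cser I (k+1)).toSubmodule
      have : ((⁅y, n⁆ : I) : L) = ⁅((y : I) : L), (n : L)⁆ := rfl
      rw [this]
      exact LieSubmodule.lie_mem_lie (y : I).2 (ih n hn)
    exact fun m hm => hle hm

theorem isNilpotent_iff_cser (I : LieIdeal F L) :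
    LieRing.IsNilpotent I ↔ ∃ k, cser I k = ⊥ := by
  rw [show LieRing.IsNilpotent I ↔ _ from LieModule.isNilpotent_iff F I I]
  constructor
  · rintro ⟨k, hk⟩
    refine ⟨k, le_bot_iff.mp fun x hx => ?_⟩
    obtain ⟨m, hm, rfl⟩ := cser_subset_val_lcs I k hx
    rw [hk] at hm
    have hm0 : m = 0 := by simpa using hm
    rw [LieSubmodule.mem_bot, hm0]; rfl
  · rintro ⟨k, hk⟩
    refine ⟨k, le_bot_iff.mp fun m hm => ?_⟩
    have := lcs_val_mem_cser I k m hm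
    rw [hk, LieSubmodule.mem_bot] at this
    exact (LieSubmodule.mem_bot _).mpr (Subtype.ext this)

variable {F L : Type*} [Field F] [LieRing L] [LieAlgebra F L]

/-- Auxiliary "mixed word bound" function for Fitting's lemma. -/
def gser (I J : LieIdeal F L) : ℕ → ℕ → LieIdeal F L
  | 0, 0 => ⊤
  | a + 1, 0 => cser I a
  | 0, b + 1 => cser J b
  | a + 1, b + 1 => cser I a ⊓ cser J b

theorem lie_gser_left (I J : LieIdeal F L) (a b : ℕ) :
    ⁅I, gser I J a b⁆ ≤ gser I J (a + 1) b := by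
  match a, b with
  | 0, 0 => exact LieSubmodule.lie_le_left _ _
  | a + 1, 0 => exact le_rfl
  | 0, b + 1 =>
    exact le_inf (LieSubmodule.lie_le_left _ _) (LieSubmodule.lie_le_right _ _)
  | a + 1, b + 1 =>
    exact le_inf ((LieSubmodule.mono_lie le_rfl inf_le_left).trans le_rfl)
      ((LieSubmodule.mono_lie le_rfl inf_le_right).trans (LieSubmodule.lie_le_right _ _))

theorem gser_comm (I J : LieIdeal F L) (a b : ℕ) : gser I J a b = gser J I b a := by
  match a, b with
  | 0, 0 => rfl
  | a + 1, 0 => rfl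
  | 0, b + 1 => rfl
  | a + 1, b + 1 => exact inf_comm _ _

theorem lie_gser_right (I J : LieIdeal F L) (a b : ℕ) :
    ⁅J, gser I J a b⁆ ≤ gser I J a (b + 1) := by
  rw [gser_comm I J a b, gser_comm I J a (b + 1)]
  exact lie_gser_left J I b a

theorem lie_finsetSup_le {α : Type*} (I : LieIdeal F L) (s : Finset α)
    (f : α → LieIdeal F L) : ⁅I, s.sup f⁆ ≤ s.sup fun a => ⁅I, f a⁆ := by
  classical
  induction s using Finset.induction with
  | empty => simp [LieSubmodule.lie_bot]
  | insert _ _ _ ih =>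
    rw [Finset.sup_insert, Finset.sup_insert, LieSubmodule.lie_sup]
    exact sup_le_sup le_rfl ih

theorem cser_sup_le_gser (I J : LieIdeal F L) (N : ℕ) :
    cser (I ⊔ J) N ≤ (Finset.range (N + 2)).sup fun a => gser I J a (N + 1 - a) := by
  induction N with
  | zero =>
    have h1 := Finset.le_sup (f := fun a => gser I J a (1 - a))
        (by simp : 1 ∈ Finset.range 2)
    have h2 := Finset.le_sup (f := fun a => gser I J a (1 - a))
        (by simp : 0 ∈ Finset.range 2)
    exact sup_le h1 h2
  | succ N ih =>
    have step : cser (I ⊔ J) (N + 1) = ⁅I, cser (I ⊔ J) N⁆ ⊔ ⁅J, cser (I ⊔ J) N⁆ := by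
      rw [cser_succ, LieSubmodule.sup_lie]
    rw [step]
    refine sup_le ?_ ?_
    · refine le_trans (LieSubmodule.mono_lie le_rfl ih) ?_
      refine le_trans (lie_finsetSup_le I _ _) ?_
      refine Finset.sup_le fun a ha => ?_
      rw [Finset.mem_range] at ha
      refine le_trans (lie_gser_left I J a (N + 1 - a)) ?_
      have hsup : gser I J (a + 1) (N + 2 - (a + 1)) ≤
          (Finset.range (N + 3)).sup fun a => gser I J a (N + 2 - a) :=
        Finset.le_sup (f := fun a => gser I J a (N + 2 - a)) (s := Finset.range (N + 3)) (b := a + 1) (Finset.mem_range.mpr (by omega))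
      have harith : N + 2 - (a + 1) = N + 1 - a := by omega
      rw [harith] at hsup
      exact hsup
    · refine le_trans (LieSubmodule.mono_lie le_rfl ih) ?_
      refine le_trans (lie_finsetSup_le J _ _) ?_
      refine Finset.sup_le fun a ha => ?_
      rw [Finset.mem_range] at ha
      refine le_trans (lie_gser_right I J a (N + 1 - a)) ?_
      have hsup : gser I J a (N + 2 - a) ≤
          (Finset.range (N + 3)).sup fun a => gser I J a (N + 2 - a) :=
        Finset.le_sup (f := fun a => gser I J a (N + 2 - a)) (s := Finset.range (N + 3)) (b := a) (Finset.mem_range.mpr (by omega))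
      have harith : N + 2 - a = N + 1 - a + 1 := by omega
      rw [harith] at hsup
      exact hsup

/-- Fitting's lemma: the sum of two nilpotent ideals is nilpotent. -/
theorem isNilpotent_sup {I J : LieIdeal F L} (hI : LieRing.IsNilpotent I)
    (hJ : LieRing.IsNilpotent J) : LieRing.IsNilpotent ↥(I ⊔ J) := by
  obtain ⟨cI, hcI⟩ := (isNilpotent_iff_cser I).mp hI
  obtain ⟨cJ, hcJ⟩ := (isNilpotent_iff_cser J).mp hJ
  refine (isNilpotent_iff_cser _).mpr ⟨cI + cJ + 1, le_bot_iff.mp ?_⟩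
  refine le_trans (cser_sup_le_gser I J (cI + cJ + 1)) ?_
  refine Finset.sup_le fun a ha => ?_
  rw [Finset.mem_range] at ha
  rcases Nat.lt_or_ge a (cI + 1) with hlt | hge
  · have hbeq : cI + cJ + 2 - a = (cI + cJ + 1 - a) + 1 := by omega
    rw [hbeq]
    have hJle : gser I J a (cI + cJ + 1 - a + 1) ≤ cser J (cI + cJ + 1 - a) := by
      match a with
      | 0 => exact le_rfl
      | a + 1 => exact inf_le_right
    refine le_trans hJle (le_trans (cser_antitone J (by omega)) (le_of_eq hcJ))
  · have haeq : ∃ a', a = a' + 1 ∧ cI ≤ a' := ⟨a - 1, by omega, by omega⟩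
    obtain ⟨a', rfl, ha'⟩ := haeq
    have hIle : gser I J (a' + 1) (cI + cJ + 2 - (a' + 1)) ≤ cser I a' := by
      match cI + cJ + 2 - (a' + 1) with
      | 0 => exact le_rfl
      | b + 1 => exact inf_le_left
    exact le_trans hIle (le_trans (cser_antitone I ha') (le_of_eq hcI))

variable {F L : Type*} [Field F] [LieRing L] [LieAlgebra F L]

theorem le_nilrad {I : LieIdeal F L} (h : LieRing.IsNilpotent I) : I ≤ nilrad F L :=
  le_sSup h

theorem isNilpotent_bot : LieRing.IsNilpotent ↥(⊥ : LieIdeal F L) := by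
  have : IsLieAbelian ↥(⊥ : LieIdeal F L) := ⟨fun x y => Subsingleton.elim _ _⟩
  infer_instance

theorem nilrad_nilpotent [FiniteDimensional F L] :
    LieRing.IsNilpotent ↥(nilrad F L) := by
  set S : Set (LieIdeal F L) := {I : LieIdeal F L | LieRing.IsNilpotent I} with hS
  have hbot : (⊥ : LieIdeal F L) ∈ S := isNilpotent_bot
  obtain ⟨B', hB'S, hmax⟩ := set_has_maximal_iff_noetherian.mpr (inferInstance : IsNoetherian F L)
    (LieSubmodule.toSubmodule '' S) ⟨_, ⟨(⊥ : LieIdeal F L), hbot, rfl⟩⟩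
  obtain ⟨B, hBS, rfl⟩ := hB'S
  have hub : ∀ I ∈ S, I ≤ B := by
    intro I hI
    have hsup : I ⊔ B ∈ S := isNilpotent_sup hI hBS
    have hnl := hmax _ ⟨_, hsup, rfl⟩
    have hle : B ≤ I ⊔ B := le_sup_right
    have : I ⊔ B ≤ B := by
      by_contra hcon
      exact hnl (lt_of_le_of_ne (((LieSubmodule.toSubmodule_le_toSubmodule (N := _) (N' := _)).mpr hle))
        (fun h => hcon (le_of_eq ((LieSubmodule.toSubmodule_inj (N := _) (N' := _)).mp h.symm))))
    exact le_sup_left.trans this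
  have : nilrad F L = B := le_antisymm (sSup_le hub) (le_sSup hBS)
  rw [this]; exact hBS

variable {F L : Type*} [Field F] [LieRing L] [LieAlgebra F L]

theorem lieQuotMk_surjective (I : LieIdeal F L) : Function.Surjective (lieQuotMk I) :=
  LieSubmodule.Quotient.surjective_mk' I

theorem lieQuotMk_eq_zero (I : LieIdeal F L) {x : L} : lieQuotMk I x = 0 ↔ x ∈ I :=
  LieSubmodule.Quotient.mk_eq_zero I

theorem ker_lieQuotMk (I : LieIdeal F L) : (lieQuotMk I).ker = I := by
  ext x
  rw [LieHom.mem_ker]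
  exact lieQuotMk_eq_zero I

instance quot_isSolvable [LieAlgebra.IsSolvable L] (I : LieIdeal F L) :
    LieAlgebra.IsSolvable (L ⧸ I) :=
  (lieQuotMk_surjective I).lieAlgebra_isSolvable

instance ideal_isSolvable [LieAlgebra.IsSolvable L] (I : LieIdeal F L) :
    LieAlgebra.IsSolvable ↥I := by
  have hinj : Function.Injective I.incl := Subtype.val_injective
  exact hinj.lieAlgebra_isSolvable

theorem upperNil_zero : upperNil F L 0 = ⊥ := rfl

theorem upperNil_succ (n : ℕ) :
    upperNil F L (n + 1) =
      LieIdeal.comap (lieQuotMk (upperNil F L n)) (nilrad F (L ⧸ upperNil F L n)) := rfl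

theorem upperNil_le_succ (n : ℕ) : upperNil F L n ≤ upperNil F L (n + 1) := by
  intro x hx
  rw [upperNil_succ, LieIdeal.mem_comap, (lieQuotMk_eq_zero _).mpr hx]
  exact (nilrad F _).zero_mem

theorem upperNil_mono {n m : ℕ} (h : n ≤ m) : upperNil F L n ≤ upperNil F L m := by
  induction m with
  | zero => simp_all [upperNil_zero]
  | succ m ih =>
    rcases Nat.lt_or_ge n (m + 1) with h' | h'
    · exact (ih (by omega)).trans (upperNil_le_succ m)
    · have : n = m + 1 := by omega
      subst this; exact le_rfl

theorem upperNil_top_mono {n m : ℕ} (h : upperNil F L n = ⊤) (hnm : n ≤ m) :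
    upperNil F L m = ⊤ :=
  le_antisymm le_top (h ▸ upperNil_mono hnm)

theorem nilrad_ne_bot [LieAlgebra.IsSolvable L] [Nontrivial L] : nilrad F L ≠ ⊥ := by
  set A := LieAlgebra.derivedAbelianOfIdeal (⊤ : LieIdeal F L) with hA
  have hab : IsLieAbelian ↥A := LieAlgebra.abelian_derivedAbelianOfIdeal _
  have hAne : A ≠ ⊥ := by
    intro hbot
    rw [hA, LieAlgebra.abelian_of_solvable_ideal_eq_bot_iff] at hbot
    revert hbot
    intro htop
    obtain ⟨x, y, hxy⟩ := exists_pair_ne L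
    have hx : x ∈ (⊥ : LieIdeal F L) := htop ▸ LieSubmodule.mem_top x
    have hy : y ∈ (⊥ : LieIdeal F L) := htop ▸ LieSubmodule.mem_top y
    rw [LieSubmodule.mem_bot] at hx hy
    exact hxy (hx.trans hy.symm)
  have hnil : LieRing.IsNilpotent ↥A := inferInstance
  intro hbot
  exact hAne (le_bot_iff.mp (hbot ▸ le_nilrad hnil))

theorem upperNil_lt_succ_of_ne_top [FiniteDimensional F L] [LieAlgebra.IsSolvable L]
    {n : ℕ} (h : upperNil F L n ≠ ⊤) : upperNil F L n < upperNil F L (n + 1) := by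
  set I := upperNil F L n with hI
  obtain ⟨x, hx⟩ : ∃ x, x ∉ I := by
    by_contra hcon
    push_neg at hcon
    exact h (le_antisymm le_top (fun x _ => hcon x))
  haveI : Nontrivial (L ⧸ I) :=
    ⟨⟨lieQuotMk I x, 0, fun hc => hx ((lieQuotMk_eq_zero I).mp hc)⟩⟩
  have hnr : nilrad F (L ⧸ I) ≠ ⊥ := nilrad_ne_bot
  obtain ⟨q, hq, hq0⟩ : ∃ q ∈ nilrad F (L ⧸ I), q ≠ 0 := by
    by_contra hcon
    push_neg at hcon
    exact hnr ((LieSubmodule.eq_bot_iff _).mpr hcon)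
  obtain ⟨z, rfl⟩ := lieQuotMk_surjective I q
  have hz1 : z ∈ upperNil F L (n + 1) := by
    rw [upperNil_succ, LieIdeal.mem_comap]; exact hq
  have hz0 : z ∉ I := fun hz => hq0 ((lieQuotMk_eq_zero I).mpr hz)
  exact lt_of_le_of_ne (upperNil_le_succ n) (fun heq => hz0 (heq ▸ hz1))

theorem exists_upperNil_top [FiniteDimensional F L] [LieAlgebra.IsSolvable L] :
    ∃ n, upperNil F L n = ⊤ := by
  have key : ∀ n : ℕ, upperNil F L n = ⊤ ∨ n ≤ Module.finrank F (upperNil F L n).toSubmodule := by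
    intro n
    induction n with
    | zero => exact Or.inr (Nat.zero_le _)
    | succ n ih =>
      by_cases htop : upperNil F L n = ⊤
      · exact Or.inl (upperNil_top_mono htop (Nat.le_succ n))
      · rcases ih with h | h
        · exact absurd h htop
        · right
          have hlt := upperNil_lt_succ_of_ne_top (F := F) (L := L) htop
          have hlt' : (upperNil F L n).toSubmodule < (upperNil F L (n+1)).toSubmodule :=
            lt_of_le_of_ne ((LieSubmodule.toSubmodule_le_toSubmodule (N := _) (N' := _)).mpr hlt.le)
              (fun hc => hlt.ne ((LieSubmodule.toSubmodule_inj (N := _) (N' := _)).mp hc))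
          have := Submodule.finrank_lt_finrank_of_lt hlt'
          omega
  rcases key (Module.finrank F L + 1) with h | h
  · exact ⟨_, h⟩
  · have hle : Module.finrank F (upperNil F L (Module.finrank F L + 1)).toSubmodule ≤
        Module.finrank F L := Submodule.finrank_le _
    omega

variable {F L : Type*} [Field F] [LieRing L] [LieAlgebra F L]

theorem map_cser {L₂ : Type*} [LieRing L₂] [LieAlgebra F L₂] (f : L →ₗ⁅F⁆ L₂)
    (hf : Function.Surjective f) (J : LieIdeal F L) (k : ℕ) :
    LieIdeal.map f (cser J k) = cser (LieIdeal.map f J) k := by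
  induction k with
  | zero => rfl
  | succ k ih => rw [cser_succ, LieIdeal.map_bracket_eq f hf, ih, cser_succ]

/-- One step of the lower nilpotent series, in the ambient lattice. -/
def dstep (J : LieIdeal F L) : LieIdeal F L := ⨅ i, cser J i

theorem dstep_le (J : LieIdeal F L) (i : ℕ) : dstep J ≤ cser J i := iInf_le _ i

theorem exists_dstep_eq [FiniteDimensional F L] (J : LieIdeal F L) :
    ∃ i, dstep J = cser J i := by
  have stab : ∃ i, cser J (i + 1) = cser J i := by
    by_contra hcon
    push_neg at hcon
    have hstrict : ∀ i, Module.finrank F (cser J (i + 1)).toSubmodule <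
        Module.finrank F (cser J i).toSubmodule := by
      intro i
      refine Submodule.finrank_lt_finrank_of_lt
        (lt_of_le_of_ne ((LieSubmodule.toSubmodule_le_toSubmodule (N := _) (N' := _)).mpr (cser_succ_le J i))
          (fun hc => hcon i ((LieSubmodule.toSubmodule_inj (N := _) (N' := _)).mp hc)))
    have hdec : ∀ i, Module.finrank F (cser J i).toSubmodule + i ≤
        Module.finrank F (cser J 0).toSubmodule := by
      intro i
      induction i with
      | zero => omega
      | succ i ih => have := hstrict i; omega
    have := hdec (Module.finrank F (cser J 0).toSubmodule + 1)
    omega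
  obtain ⟨i, hi⟩ := stab
  have hstable : ∀ m, i ≤ m → cser J m = cser J i := by
    intro m hm
    induction m with
    | zero => simp_all
    | succ m ih =>
      rcases Nat.lt_or_ge i (m + 1) with h' | h'
      · have hmi := ih (by omega)
        rw [cser_succ, hmi, ← cser_succ, hi]
      · have : i = m + 1 := by omega
        rw [this]
  refine ⟨i, le_antisymm (iInf_le _ i) (le_iInf fun m => ?_)⟩
  rcases le_or_gt i m with h' | h'
  · rw [hstable m h']
  · exact cser_antitone J h'.le

theorem ascent_step [FiniteDimensional F L] (J : LieIdeal F L) (m : ℕ)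
    (h : dstep J ≤ upperNil F L m) : J ≤ upperNil F L (m + 1) := by
  set π := lieQuotMk (upperNil F L m) with hπ
  obtain ⟨i, hi⟩ := exists_dstep_eq J
  have h1 : cser J i ≤ π.ker := by
    rw [hπ, ker_lieQuotMk]; rw [hi] at h; exact h
  have h2 : cser (LieIdeal.map π J) i = ⊥ := by
    rw [← map_cser π (lieQuotMk_surjective _) J i]
    exact LieIdeal.map_eq_bot_iff.mpr h1
  have h3 : LieRing.IsNilpotent ↥(LieIdeal.map π J) :=
    (isNilpotent_iff_cser _).mpr ⟨i, h2⟩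
  have h4 : LieIdeal.map π J ≤ nilrad F (L ⧸ upperNil F L m) := le_nilrad h3
  rw [upperNil_succ]
  exact LieIdeal.comap_map_le.trans (LieIdeal.comap_mono h4)

theorem ascent [FiniteDimensional F L] (M : LieIdeal F L) :
    ∀ t r, dstep^[t] M ≤ upperNil F L r → M ≤ upperNil F L (r + t) := by
  intro t
  induction t with
  | zero => intro r h; simpa using h
  | succ t ih =>
    intro r h
    rw [Function.iterate_succ_apply'] at h
    have := ascent_step (dstep^[t] M) r h
    have := ih (r + 1) this
    have harith : r + 1 + t = r + (t + 1) := by omega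
    rwa [harith] at this

theorem cser_subset_of_subset (Mid : LieIdeal F L) (P : LieIdeal F ↥Mid) (J : LieIdeal F L)
    (hJ : (J : Set L) ⊆ Subtype.val '' (P : Set ↥Mid)) (k : ℕ) :
    ((cser J k : LieIdeal F L) : Set L) ⊆ Subtype.val '' ((cser P k : LieIdeal F ↥Mid) : Set ↥Mid) := by
  induction k with
  | zero => exact hJ
  | succ k ih =>
    intro x hx
    have hle : (cser J (k + 1)).toSubmodule ≤
        Submodule.map (Mid.toSubmodule.subtype) (cser P (k + 1)).toSubmodule := by
      rw [cser_succ, LieSubmodule.lieIdeal_oper_eq_linear_span', Submodule.span_le]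
      rintro z ⟨y, hy, n, hn, rfl⟩
      obtain ⟨p, hp, hpval⟩ := hJ hy
      obtain ⟨q, hq, hqval⟩ := ih hn
      refine ⟨⁅p, q⁆, LieSubmodule.lie_mem_lie hp hq, ?_⟩
      show ((⁅p, q⁆ : ↥Mid) : L) = ⁅y, n⁆
      rw [← hpval, ← hqval]; rfl
    obtain ⟨q, hq, hqv⟩ := hle hx
    exact ⟨q, hq, hqv⟩

theorem descent (Mid : LieIdeal F L) [FiniteDimensional F ↥Mid] (j : ℕ)
    (htop : upperNil F ↥Mid j = ⊤) :
    ∀ m, ((dstep^[m] Mid : LieIdeal F L) : Set L) ⊆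
      Subtype.val '' ((upperNil F ↥Mid (j - m) : LieIdeal F ↥Mid) : Set ↥Mid) := by
  intro m
  induction m with
  | zero =>
    intro x hx
    refine ⟨⟨x, hx⟩, ?_, rfl⟩
    simp only [Nat.sub_zero, htop]
    exact LieSubmodule.mem_top _
  | succ m ih =>
    rcases le_or_gt j m with hjm | hjm
    · -- j - m = 0 = j - (m+1); dstep decreases
      have h0 : j - m = j - (m + 1) := by omega
      rw [Function.iterate_succ_apply']
      intro x hx
      exact h0 ▸ ih ((dstep_le _ 0) hx)
    · -- j - m = (j - (m+1)) + 1
      set r := j - (m + 1) with hr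
      have hjmr : j - m = r + 1 := by omega
      rw [hjmr] at ih
      set P' := upperNil F ↥Mid r with hP'
      set π' := lieQuotMk P' with hπ'
      set P := upperNil F ↥Mid (r + 1) with hP
      have hmapP : LieIdeal.map π' P = nilrad F (↥Mid ⧸ P') := by
        refine le_antisymm ?_ ?_
        · rw [hP, upperNil_succ, ← hπ']
          exact LieIdeal.map_comap_le
        · intro q hq
          obtain ⟨x, rfl⟩ := lieQuotMk_surjective P' q
          exact LieIdeal.mem_map (by rw [hP, upperNil_succ, ← hπ', LieIdeal.mem_comap]; exact hq)
      have hnr : LieRing.IsNilpotent ↥(nilrad F (↥Mid ⧸ P')) := nilrad_nilpotent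
      obtain ⟨c, hc⟩ := (isNilpotent_iff_cser _).mp hnr
      have h5 : cser P c ≤ P' := by
        have hm : LieIdeal.map π' (cser P c) = ⊥ := by
          rw [map_cser π' (lieQuotMk_surjective _) P c, hmapP, hc]
        have := LieIdeal.map_eq_bot_iff.mp hm
        rwa [hπ', ker_lieQuotMk] at this
      rw [Function.iterate_succ_apply']
      intro x hx
      have hx1 : x ∈ cser (dstep^[m] Mid) c := (dstep_le _ c) hx
      obtain ⟨p, hp, rfl⟩ := cser_subset_of_subset Mid P (dstep^[m] Mid) ih c hx1
      exact ⟨p, h5 hp, rfl⟩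

theorem ideal_le_upperNil [FiniteDimensional F L] (Mid : LieIdeal F L) (j : ℕ)
    (htop : upperNil F ↥Mid j = ⊤) : Mid ≤ upperNil F L j := by
  have hbot : dstep^[j] Mid = ⊥ := by
    rw [LieSubmodule.eq_bot_iff]
    intro x hx
    obtain ⟨p, hp, rfl⟩ := descent Mid j htop j hx
    have : p = 0 := by simpa [upperNil] using hp
    rw [this]; rfl
  have := ascent Mid j 0 (by rw [hbot]; exact bot_le)
  simpa using this

variable {F L : Type*} [Field F] [LieRing L] [LieAlgebra F L]

theorem exists_hyperplane [FiniteDimensional F L] {U : Submodule F L} (hU : U ≠ ⊤) :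
    ∃ W : Submodule F L, U ≤ W ∧ Module.finrank F W + 1 = Module.finrank F L := by
  obtain ⟨W, ⟨hUW, hWne⟩, hmax⟩ := set_has_maximal_iff_noetherian.mpr
    (inferInstance : IsNoetherian F L) {V : Submodule F L | U ≤ V ∧ V ≠ ⊤}
    ⟨U, le_rfl, hU⟩
  have hlt : Module.finrank F W < Module.finrank F L :=
    Submodule.finrank_lt hWne
  obtain ⟨x, hx⟩ : ∃ x, x ∉ W := by
    by_contra hcon; push_neg at hcon
    exact hWne (le_antisymm le_top (fun y _ => hcon y))
  have hx0 : x ≠ 0 := fun h => hx (h ▸ W.zero_mem)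
  have hWlt : W < W ⊔ Submodule.span F {x} :=
    lt_of_le_of_ne le_sup_left (fun h => hx (h ▸ (le_sup_right : Submodule.span F {x} ≤ W ⊔ Submodule.span F {x}) (Submodule.mem_span_singleton_self x)))
  have htop : W ⊔ Submodule.span F {x} = ⊤ := by
    by_contra hc
    exact hmax _ ⟨hUW.trans le_sup_left, hc⟩ hWlt
  have hrank := Submodule.finrank_sup_add_finrank_inf_eq W (Submodule.span F {x})
  have hs1 : Module.finrank F (Submodule.span F {x}) = 1 := finrank_span_singleton hx0
  have hts : Module.finrank F ↥(W ⊔ Submodule.span F {x}) = Module.finrank F L := by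
    rw [htop]; exact finrank_top F L
  refine ⟨W, hUW, ?_⟩
  rw [hts, hs1] at hrank
  omega

theorem stmt17aux {F L : Type*} [Field F] [LieRing L] [LieAlgebra F L]
    [FiniteDimensional F L] [LieAlgebra.IsSolvable L]
    (k : ℕ) (hk : 1 ≤ k) (hL : nilLen F L = k)
    (hmin : ∀ M : LieSubalgebra F L, M ≠ ⊤ → nilLen F M ≤ k - 1) :
    LieAlgebra.derivedSeries F L 1 = upperNil F L (k - 1) ∧
      Module.finrank F (L ⧸ LieAlgebra.derivedSeries F L 1) = 1 := by
  classical
  have hL' : sInf {n | upperNil F L n = ⊤} = k := hL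
  haveI hnontriv : Nontrivial L := by
    by_contra hcon
    rw [not_nontrivial_iff_subsingleton] at hcon
    have h0 : upperNil F L 0 = ⊤ :=
      le_antisymm le_top (fun x _ => by rw [Subsingleton.elim x 0]; exact (upperNil F L 0).zero_mem)
    have := Nat.sInf_le (show (0 : ℕ) ∈ {n | upperNil F L n = ⊤} from h0)
    omega
  have hSne : {n | upperNil F L n = ⊤}.Nonempty := exists_upperNil_top
  have hUNk1 : upperNil F L (k - 1) ≠ ⊤ := by
    intro hc
    have := Nat.sInf_le (show (k - 1 : ℕ) ∈ {n | upperNil F L n = ⊤} from hc)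
    omega
  have hds : LieAlgebra.derivedSeries F L 1 < ⊤ := LieAlgebra.derivedSeries_lt_top_of_solvable F L
  -- Any hyperplane containing the derived algebra is contained in `N (k-1)`.
  have hkey : ∀ W : Submodule F L, (LieAlgebra.derivedSeries F L 1).toSubmodule ≤ W →
      Module.finrank F W + 1 = Module.finrank F L →
      W ≤ (upperNil F L (k - 1)).toSubmodule := by
    intro W hDW hWrank
    have hlie : ∀ {x m : L}, m ∈ W → ⁅x, m⁆ ∈ W := by
      intro x m _
      refine hDW ?_
      show ⁅x, m⁆ ∈ (LieAlgebra.derivedSeries F L 1 : LieIdeal F L)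
      rw [show LieAlgebra.derivedSeries F L 1 = ⁅(⊤ : LieIdeal F L), (⊤ : LieIdeal F L)⁆ from rfl]
      exact LieSubmodule.lie_mem_lie trivial trivial
    set Mid : LieIdeal F L := { toSubmodule := W, lie_mem := hlie } with hMid
    have hMne : Mid ≠ ⊤ := by
      intro hc
      have : W = ⊤ := congrArg LieSubmodule.toSubmodule hc
      rw [this, finrank_top] at hWrank
      omega
    have hsub : Mid.toLieSubalgebra ≠ ⊤ := by
      intro hc
      refine hMne (le_antisymm le_top (fun x _ => ?_))
      have hmem : x ∈ (⊤ : LieSubalgebra F L) := trivial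
      rw [← hc] at hmem
      exact hmem
    have hnil1 : nilLen F ↥Mid ≤ k - 1 := hmin _ hsub
    have hnil1' : sInf {n | upperNil F ↥Mid n = ⊤} ≤ k - 1 := hnil1
    have hSM : {n | upperNil F ↥Mid n = ⊤}.Nonempty := exists_upperNil_top
    have hMtop : upperNil F ↥Mid (k - 1) = ⊤ :=
      upperNil_top_mono (Nat.sInf_mem hSM) hnil1'
    have := ideal_le_upperNil Mid (k - 1) hMtop
    exact (LieSubmodule.toSubmodule_le_toSubmodule (N := _) (N' := _)).mpr this
  set DS := LieAlgebra.derivedSeries F L 1 with hDS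
  have hDSlt : DS.toSubmodule < ⊤ := by
    refine lt_of_le_of_ne le_top (fun hc => ?_)
    exact hds.ne ((LieSubmodule.toSubmodule_inj (N := _) (N' := _)).mp
      (hc.trans (LieSubmodule.top_toSubmodule).symm))
  have hr : Module.finrank F DS.toSubmodule < Module.finrank F L := Submodule.finrank_lt hDSlt.ne
  have hcodim1 : Module.finrank F DS.toSubmodule + 1 = Module.finrank F L := by
    by_contra hc
    have hN : ∀ x : L, x ∈ (upperNil F L (k - 1)).toSubmodule := by
      intro x
      rcases eq_or_ne x 0 with rfl | hx0
      · exact Submodule.zero_mem _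
      have hU : DS.toSubmodule ⊔ Submodule.span F {x} ≠ ⊤ := by
        intro hcU
        have hrank := Submodule.finrank_sup_add_finrank_inf_eq DS.toSubmodule
          (Submodule.span F {x})
        rw [hcU, finrank_top, finrank_span_singleton hx0] at hrank
        omega
      obtain ⟨W, hUW, hWr⟩ := exists_hyperplane hU
      have hWN := hkey W (le_sup_left.trans hUW) hWr
      exact hWN (hUW ((le_sup_right :
        Submodule.span F {x} ≤ DS.toSubmodule ⊔ Submodule.span F {x})
        (Submodule.mem_span_singleton_self x)))
    apply hUNk1
    refine le_antisymm le_top (fun x _ => hN x)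
  constructor
  · have hDSN : DS ≤ upperNil F L (k - 1) :=
      (LieSubmodule.toSubmodule_le_toSubmodule (N := _) (N' := _)).mp (hkey DS.toSubmodule le_rfl hcodim1)
    by_contra hne
    have hlt : DS.toSubmodule < (upperNil F L (k - 1)).toSubmodule :=
      lt_of_le_of_ne ((LieSubmodule.toSubmodule_le_toSubmodule (N := _) (N' := _)).mpr hDSN)
        (fun hc => hne ((LieSubmodule.toSubmodule_inj (N := _) (N' := _)).mp hc))
    have h1 := Submodule.finrank_lt_finrank_of_lt hlt
    have h2 : Module.finrank F (upperNil F L (k - 1)).toSubmodule ≤ Module.finrank F L :=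
      Submodule.finrank_le _
    have h3 : Module.finrank F (upperNil F L (k - 1)).toSubmodule = Module.finrank F L := by
      omega
    exact hUNk1 ((LieSubmodule.toSubmodule_inj (N := _) (N' := _)).mp
      ((Submodule.eq_top_of_finrank_eq h3).trans (LieSubmodule.top_toSubmodule).symm))
  · have := Submodule.finrank_quotient_add_finrank DS.toSubmodule
    have hq : Module.finrank F (L ⧸ DS) + Module.finrank F DS.toSubmodule =
        Module.finrank F L := this
    omega

end Stmt17Aux

/-- If `L` is minimal non-`𝒩(≤ k-1)`, then `L² = N (k-1) (L)` has codimension one. -/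
theorem stmt17 {F L : Type*} [Field F] [LieRing L] [LieAlgebra F L]
    [FiniteDimensional F L] [LieAlgebra.IsSolvable L]
    (k : ℕ) (hk : 1 ≤ k) (hL : nilLen F L = k)
    (hmin : ∀ M : LieSubalgebra F L, M ≠ ⊤ → nilLen F M ≤ k - 1) :
    LieAlgebra.derivedSeries F L 1 = upperNil F L (k - 1) ∧
      Module.finrank F (L ⧸ LieAlgebra.derivedSeries F L 1) = 1 := by
  exact Stmt17Aux.stmt17aux k hk hL hmin
end
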